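/- For any d×d density matrix ρ, the geometric measure of coherence is bounded above by the modified trace distance measure of coherence: 1 − sup_{δ diagonal density matrix} F(ρ, δ) ≤ inf_{λ ≥ 0, δ diagonal density matrix} ‖ρ − λδ‖_tr, where F(ρ, σ) = (Tr √(√σ ρ √σ))² is the fidelity. -/

import Mathlib

open Matrix
open scoped ComplexOrder

namespace Matrix.PosSemidef

/-- The positive semidefinite square root of a positive semidefinite matrix
(the definition removed from Mathlib, restated verbatim). -/
noncomputable def sqrt {n : Type*} [Fintype n] [DecidableEq n] {𝕜 : Type*} [RCLike 𝕜]
    {A : Matrix n n 𝕜} (hA : PosSemidef A) : Matrix n n 𝕜 :=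
  hA.1.eigenvectorUnitary.1 * diagonal ((↑) ∘ (√·) ∘ hA.1.eigenvalues) *
  (star hA.1.eigenvectorUnitary : Matrix n n 𝕜)

end Matrix.PosSemidef

/-- The trace norm of a matrix `A`: `‖A‖_tr = Tr √(AᴴA)`. -/
noncomputable def traceNorm {d : ℕ} (A : Matrix (Fin d) (Fin d) ℂ) : ℝ :=
  ((Matrix.posSemidef_conjTranspose_mul_self A).sqrt.trace).re

/-- The Hilbert–Schmidt norm of a matrix `A`: `‖A‖_HS = √(Tr(AᴴA))`. -/
noncomputable def hsNorm {d : ℕ} (A : Matrix (Fin d) (Fin d) ℂ) : ℝ :=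
  Real.sqrt (((Aᴴ * A).trace).re)

set_option maxHeartbeats 1000000

namespace Matrix.PosSemidef

open scoped MatrixOrder

variable {n : Type*} [Fintype n] [DecidableEq n] {A : Matrix n n ℂ}

lemma sqrt_eq_cfcSqrt (hA : A.PosSemidef) : hA.sqrt = CFC.sqrt A := by
  rw [CFC.sqrt_eq_real_sqrt A hA.nonneg, cfcₙ_eq_cfc, hA.1.cfc_eq, IsHermitian.cfc,
    Unitary.conjStarAlgAut_apply]
  rfl

lemma posSemidef_sqrt (hA : A.PosSemidef) : hA.sqrt.PosSemidef := by
  rw [sqrt_eq_cfcSqrt]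
  exact Matrix.nonneg_iff_posSemidef.mp (CFC.sqrt_nonneg A)

lemma sq_sqrt (hA : A.PosSemidef) : hA.sqrt ^ 2 = A := by
  rw [sqrt_eq_cfcSqrt]
  exact CFC.sq_sqrt A hA.nonneg

lemma sqrt_mul_self (hA : A.PosSemidef) : hA.sqrt * hA.sqrt = A := by
  rw [sqrt_eq_cfcSqrt]
  exact CFC.sqrt_mul_sqrt_self A hA.nonneg

lemma eq_sqrt_of_sq_eq {B : Matrix n n ℂ} (hA : A.PosSemidef) (hB : B.PosSemidef)
    (hAB : A ^ 2 = B) : A = hB.sqrt := by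
  rw [sqrt_eq_cfcSqrt]
  exact (CFC.sqrt_unique (by rw [← sq]; exact hAB) hA.nonneg).symm

end Matrix.PosSemidef

namespace CohAux

variable {n : Type*} [Fintype n] [DecidableEq n]

lemma star_mul_self_one {U : Matrix n n ℂ} (hU : U ∈ Matrix.unitaryGroup n ℂ) :
    star U * U = 1 := Matrix.mem_unitaryGroup_iff'.mp hU

lemma mul_star_self_one {U : Matrix n n ℂ} (hU : U ∈ Matrix.unitaryGroup n ℂ) :
    U * star U = 1 := Matrix.mem_unitaryGroup_iff.mp hU

lemma trace_conj_eq {U : Matrix n n ℂ} (hU : U ∈ Matrix.unitaryGroup n ℂ)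
    (D : Matrix n n ℂ) : (U * D * star U).trace = D.trace := by
  rw [Matrix.trace_mul_cycle, star_mul_self_one hU, Matrix.one_mul]

lemma conj_mul_conj {U : Matrix n n ℂ} (hU : U ∈ Matrix.unitaryGroup n ℂ)
    (f g : n → ℂ) :
    (U * Matrix.diagonal f * star U) * (U * Matrix.diagonal g * star U)
      = U * Matrix.diagonal (f * g) * star U := by
  have h1 : star U * (U * Matrix.diagonal g * star U) =
      Matrix.diagonal g * star U := by
    rw [← Matrix.mul_assoc, ← Matrix.mul_assoc, star_mul_self_one hU, Matrix.one_mul]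
  rw [Matrix.mul_assoc (U * Matrix.diagonal f), h1,
    ← Matrix.mul_assoc (U * Matrix.diagonal f), Matrix.mul_assoc U,
    Matrix.diagonal_mul_diagonal]
  rfl

lemma conj_psd {U : Matrix n n ℂ} (hU : U ∈ Matrix.unitaryGroup n ℂ)
    {f : n → ℝ} (hf : ∀ i, 0 ≤ f i) :
    Matrix.PosSemidef (U * Matrix.diagonal (fun i => (f i : ℂ)) * star U) := by
  have hd : Matrix.PosSemidef (Matrix.diagonal (fun i => (f i : ℂ))) := by
    refine Matrix.posSemidef_diagonal_iff.mpr fun i => ?_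
    exact_mod_cast Complex.zero_le_real.mpr (hf i)
  simpa [Matrix.star_eq_conjTranspose] using hd.mul_mul_conjTranspose_same U

/-- trace of a Hermitian matrix is the (complexified) sum of its eigenvalues -/
lemma trace_hermitian {A : Matrix n n ℂ} (hA : A.IsHermitian) :
    A.trace = ((∑ i, hA.eigenvalues i : ℝ) : ℂ) := by
  conv_lhs => rw [hA.spectral_theorem, Unitary.conjStarAlgAut_apply]
  rw [trace_conj_eq (hA.eigenvectorUnitary).2, Matrix.trace_diagonal]
  push_cast
  rfl

/-- the PSD square root, written via the spectral data of `A` -/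
lemma sqrt_trace_re {A : Matrix n n ℂ} (hA : A.PosSemidef) :
    hA.sqrt.trace.re = ∑ i, Real.sqrt (hA.1.eigenvalues i) := by
  rw [Matrix.PosSemidef.sqrt, trace_conj_eq (hA.1.eigenvectorUnitary).2,
    Matrix.trace_diagonal]
  rw [Complex.re_sum]
  simp [Function.comp]

lemma sqrt_congr {A B : Matrix n n ℂ} (hA : A.PosSemidef) (hB : B.PosSemidef)
    (h : A = B) : hA.sqrt = hB.sqrt := by subst h; rfl

lemma psd_trace_re_nonneg {A : Matrix n n ℂ} (hA : A.PosSemidef) : 0 ≤ A.trace.re := by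
  rw [trace_hermitian hA.1]
  simpa using Finset.sum_nonneg fun i _ => hA.eigenvalues_nonneg i

/-- diagonal entries of `star A * A` -/
lemma star_mul_self_diag (A : Matrix n n ℂ) (i : n) :
    (star A * A) i i = ((∑ j, ‖A j i‖ ^ 2 : ℝ) : ℂ) := by
  rw [Matrix.mul_apply]
  push_cast
  congr 1 with j
  rw [Matrix.star_apply, Complex.star_def]
  rw [← Complex.normSq_eq_conj_mul_self, Complex.normSq_eq_norm_sq]
  norm_cast


lemma col_sq_sum {U : Matrix n n ℂ} (hU : U ∈ Matrix.unitaryGroup n ℂ) (i : n) :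
    ∑ j, ‖U j i‖ ^ 2 = 1 := by
  have h := star_mul_self_diag U i
  rw [star_mul_self_one hU] at h
  have : ((∑ j, ‖U j i‖ ^ 2 : ℝ) : ℂ) = ((1 : ℝ) : ℂ) := by
    rw [← h]; simp [Matrix.one_apply]
  exact_mod_cast this

/-- `Re Tr C ≤ ‖C‖_tr`, key duality-type bound. -/
lemma re_trace_le (C : Matrix n n ℂ) :
    C.trace.re ≤ ((Matrix.posSemidef_conjTranspose_mul_self C).sqrt.trace).re := by
  set h := Matrix.posSemidef_conjTranspose_mul_self C with hh
  set hH := h.1 with hhH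
  set U : Matrix n n ℂ := (hH.eigenvectorUnitary : Matrix n n ℂ) with hUdef
  have hU : U ∈ Matrix.unitaryGroup n ℂ := (hH.eigenvectorUnitary).2
  set μ := hH.eigenvalues with hμ
  have hdiag : star U * (Cᴴ * C) * U = Matrix.diagonal (RCLike.ofReal ∘ μ) :=
    by
      have := Matrix.IsHermitian.conjStarAlgAut_star_eigenvectorUnitary hH
      rwa [Unitary.conjStarAlgAut_apply, Unitary.coe_star, star_star] at this
  -- column norms of C * U
  have hCU : ∀ i, ∑ j, ‖(C * U) j i‖ ^ 2 = μ i := by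
    intro i
    have hB : star (C * U) * (C * U) = Matrix.diagonal (RCLike.ofReal ∘ μ) := by
      rw [Matrix.star_mul, ← Matrix.mul_assoc, Matrix.mul_assoc (star U)]
      rw [Matrix.star_eq_conjTranspose C, ← Matrix.mul_assoc (star U), ← hdiag,
        Matrix.mul_assoc (star U)]
    have h2 := star_mul_self_diag (C * U) i
    rw [hB] at h2
    have : ((∑ j, ‖(C * U) j i‖ ^ 2 : ℝ) : ℂ) = ((μ i : ℝ) : ℂ) := by
      rw [← h2]; simp [Matrix.diagonal_apply_eq]
    exact_mod_cast this
  -- trace invariance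
  have htr : C.trace = (star U * C * U).trace := by
    rw [Matrix.trace_mul_cycle, mul_star_self_one hU, Matrix.one_mul]
  -- entrywise bound
  have hent : ∀ i, ‖(star U * C * U) i i‖ ≤ Real.sqrt (μ i) := by
    intro i
    have he : (star U * C * U) i i = ∑ j, star (U j i) * (C * U) j i := by
      rw [Matrix.mul_assoc, Matrix.mul_apply]
      simp [Matrix.star_apply]
    rw [he]
    calc ‖∑ j, star (U j i) * (C * U) j i‖
        ≤ ∑ j, ‖star (U j i) * (C * U) j i‖ := norm_sum_le _ _
      _ = ∑ j, ‖U j i‖ * ‖(C * U) j i‖ := by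
          congr 1 with j; rw [norm_mul, norm_star]
      _ = ∑ j, Real.sqrt (‖U j i‖ ^ 2) * Real.sqrt (‖(C * U) j i‖ ^ 2) := by
          congr 1 with j
          rw [Real.sqrt_sq (norm_nonneg _), Real.sqrt_sq (norm_nonneg _)]
      _ ≤ Real.sqrt (∑ j, ‖U j i‖ ^ 2) * Real.sqrt (∑ j, ‖(C * U) j i‖ ^ 2) :=
          Real.sum_sqrt_mul_sqrt_le _ (fun j => sq_nonneg _) (fun j => sq_nonneg _)
      _ = Real.sqrt (μ i) := by
          rw [col_sq_sum hU, hCU i]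
          simp
  -- conclude
  rw [htr, sqrt_trace_re h]
  rw [Matrix.trace, Complex.re_sum]
  refine Finset.sum_le_sum fun i _ => ?_
  exact (Complex.re_le_norm _).trans (hent i)


lemma col_sq_sum' {U : Matrix n n ℂ} (hU : star U * U = 1) (i : n) :
    ∑ j, ‖U j i‖ ^ 2 = 1 := by
  have h := star_mul_self_diag U i
  rw [hU] at h
  have : ((∑ j, ‖U j i‖ ^ 2 : ℝ) : ℂ) = ((1 : ℝ) : ℂ) := by
    rw [← h]; simp [Matrix.one_apply]
  exact_mod_cast this

/-- trace norm of a Hermitian matrix is the sum of the absolute values of eigenvalues -/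
lemma herm_traceNorm {X : Matrix n n ℂ} (hX : X.IsHermitian) :
    ((Matrix.posSemidef_conjTranspose_mul_self X).sqrt.trace).re
      = ∑ i, |hX.eigenvalues i| := by
  set U : Matrix n n ℂ := (hX.eigenvectorUnitary : Matrix n n ℂ) with hUdef
  have hU : U ∈ Matrix.unitaryGroup n ℂ := (hX.eigenvectorUnitary).2
  set lam := hX.eigenvalues with hlam
  set R : Matrix n n ℂ := U * Matrix.diagonal (fun i => ((|lam i| : ℝ) : ℂ)) * star U with hR
  have hRpsd : R.PosSemidef := conj_psd hU (fun i => abs_nonneg _)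
  have hR2 : R ^ 2 = Xᴴ * X := by
    rw [pow_two, hR, conj_mul_conj hU]
    rw [hX.eq]
    conv_rhs => rw [hX.spectral_theorem, Unitary.conjStarAlgAut_apply]
    rw [conj_mul_conj hU]
    have hfun : (fun i => ((|lam i| : ℝ) : ℂ)) * (fun i => ((|lam i| : ℝ) : ℂ))
        = (RCLike.ofReal ∘ lam) * (RCLike.ofReal ∘ lam) := by
      funext i
      simp only [Pi.mul_apply, Function.comp_apply]
      rw [← Complex.ofReal_mul, abs_mul_abs_self, Complex.ofReal_mul]
      rfl
    rw [hfun]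
  have hEq : R = (Matrix.posSemidef_conjTranspose_mul_self X).sqrt :=
    hRpsd.eq_sqrt_of_sq_eq _ hR2
  rw [← hEq, hR, trace_conj_eq hU, Matrix.trace_diagonal, Complex.re_sum]
  simp

/-- duality-type bound: `Re Tr (X W) ≤ Σ |λ_i(X)|` for `W = V diag(c) V*`, `|c| ≤ 1`. -/
lemma re_trace_mul_contraction_le {X : Matrix n n ℂ} (hX : X.IsHermitian)
    {V : Matrix n n ℂ} (hV : V ∈ Matrix.unitaryGroup n ℂ) (c : n → ℝ)
    (hc : ∀ i, |c i| ≤ 1) :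
    ((X * (V * Matrix.diagonal (fun i => (c i : ℂ)) * star V)).trace).re
      ≤ ∑ i, |hX.eigenvalues i| := by
  set U : Matrix n n ℂ := (hX.eigenvectorUnitary : Matrix n n ℂ) with hUdef
  have hU : U ∈ Matrix.unitaryGroup n ℂ := (hX.eigenvectorUnitary).2
  set lam := hX.eigenvalues with hlam
  set W : Matrix n n ℂ := V * Matrix.diagonal (fun i => (c i : ℂ)) * star V with hW
  set N : Matrix n n ℂ := star V * U with hN
  have hNU : star N * N = 1 := by
    rw [hN, StarMul.star_mul, star_star, Matrix.mul_assoc, ← Matrix.mul_assoc V,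
      mul_star_self_one hV, Matrix.one_mul, star_mul_self_one hU]
  set M : Matrix n n ℂ := star U * W * U with hM
  have hMN : M = star N * Matrix.diagonal (fun i => (c i : ℂ)) * N := by
    rw [hM, hN, hW, StarMul.star_mul, star_star]
    simp only [Matrix.mul_assoc]
  have hMentry : ∀ i, M i i = ((∑ k, c k * ‖N k i‖ ^ 2 : ℝ) : ℂ) := by
    intro i
    rw [hMN, Matrix.mul_assoc, Matrix.mul_apply]
    push_cast
    congr 1 with k
    rw [Matrix.star_apply, Matrix.diagonal_mul, mul_left_comm, Complex.star_def,
      ← Complex.normSq_eq_conj_mul_self, Complex.normSq_eq_norm_sq]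
    norm_cast
  have htr : (X * W).trace = ∑ i, (lam i : ℂ) * M i i := by
    conv_lhs => rw [hX.spectral_theorem, Unitary.conjStarAlgAut_apply]
    rw [Matrix.trace_mul_cycle, Matrix.trace_mul_cycle, ← Matrix.mul_assoc,
      Matrix.trace_mul_comm]
    rw [Matrix.trace]
    congr 1 with i
    rw [Matrix.diag_apply, Matrix.diagonal_mul]
    rfl
  have hre : ((X * W).trace).re = ∑ i, lam i * (M i i).re := by
    rw [htr, Complex.re_sum]
    congr 1 with i
    simp [Complex.mul_re]
  rw [hre]
  refine Finset.sum_le_sum fun i _ => ?_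
  have hMre : (M i i).re = ∑ k, c k * ‖N k i‖ ^ 2 := by
    rw [hMentry i, Complex.ofReal_re]
  have hMabs : |(M i i).re| ≤ 1 := by
    rw [hMre]
    calc |∑ k, c k * ‖N k i‖ ^ 2| ≤ ∑ k, |c k * ‖N k i‖ ^ 2| :=
          Finset.abs_sum_le_sum_abs _ _
      _ ≤ ∑ k, ‖N k i‖ ^ 2 := by
          refine Finset.sum_le_sum fun k _ => ?_
          rw [abs_mul, abs_of_nonneg (sq_nonneg (‖N k i‖))]
          exact mul_le_of_le_one_left (sq_nonneg _) (hc k)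
      _ = 1 := col_sq_sum' hNU i
  calc lam i * (M i i).re ≤ |lam i * (M i i).re| := le_abs_self _
    _ = |lam i| * |(M i i).re| := abs_mul _ _
    _ ≤ |lam i| * 1 := by
        exact mul_le_mul_of_nonneg_left hMabs (abs_nonneg _)
    _ = |lam i| := mul_one _


lemma trace_mul_psd_re_nonneg {P Q : Matrix n n ℂ} (hP : P.PosSemidef)
    (hQ : Q.PosSemidef) : 0 ≤ ((P * Q).trace).re := by
  have h1 : (P * Q).trace = (hP.sqrt * Q * hP.sqrt).trace := by
    conv_lhs => rw [← hP.sqrt_mul_self, Matrix.mul_assoc, Matrix.trace_mul_comm]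
  have h2 : (hP.sqrt * Q * hP.sqrt).PosSemidef := by
    have := hQ.mul_mul_conjTranspose_same hP.sqrt
    rwa [hP.posSemidef_sqrt.1.eq] at this
  rw [h1]
  exact psd_trace_re_nonneg h2

lemma smul_psd {M : Matrix n n ℂ} (hM : M.PosSemidef) {r : ℝ} (hr : 0 ≤ r) :
    ((r : ℂ) • M).PosSemidef := by
  have h0 : (0 : ℂ) ≤ (r : ℂ) := by exact_mod_cast Complex.zero_le_real.mpr hr
  exact hM.smul h0

lemma sqrt_smul {M : Matrix n n ℂ} (hM : M.PosSemidef) {r : ℝ} (hr : 0 ≤ r)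
    (hB : ((r : ℂ) • M).PosSemidef) :
    hB.sqrt = ((Real.sqrt r : ℝ) : ℂ) • hM.sqrt := by
  have hA : (((Real.sqrt r : ℝ) : ℂ) • hM.sqrt).PosSemidef :=
    smul_psd hM.posSemidef_sqrt (Real.sqrt_nonneg r)
  have hsq : (((Real.sqrt r : ℝ) : ℂ) • hM.sqrt) ^ 2 = (r : ℂ) • M := by
    rw [smul_pow, hM.sq_sqrt]
    congr 1
    rw [← Complex.ofReal_pow, Real.sq_sqrt hr]
  exact (hA.eq_sqrt_of_sq_eq hB hsq).symm

/-- Powers–Størmer inequality. -/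
lemma powers_stormer {A B : Matrix n n ℂ} (hA : A.PosSemidef) (hB : B.PosSemidef) :
    A.trace.re + B.trace.re - 2 * ((hA.sqrt * hB.sqrt).trace).re
      ≤ (((Matrix.posSemidef_conjTranspose_mul_self (A - B)).sqrt.trace)).re := by
  set P := hA.sqrt with hPd
  set Q := hB.sqrt with hQd
  have hP : P.PosSemidef := hA.posSemidef_sqrt
  have hQ : Q.PosSemidef := hB.posSemidef_sqrt
  set S : Matrix n n ℂ := P - Q with hSd
  have hS : S.IsHermitian := hP.1.sub hQ.1
  set V : Matrix n n ℂ := (hS.eigenvectorUnitary : Matrix n n ℂ) with hV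
  have hVu : V ∈ Matrix.unitaryGroup n ℂ := (hS.eigenvectorUnitary).2
  set e := hS.eigenvalues with he
  set c : n → ℝ := fun i => if 0 ≤ e i then 1 else -1 with hc
  have hce : ∀ i, c i * e i = |e i| := by
    intro i
    by_cases h : 0 ≤ e i
    · simp [hc, h, abs_of_nonneg h]
    · simp [hc, h, abs_of_neg (lt_of_not_ge h)]
  set W : Matrix n n ℂ := V * Matrix.diagonal (fun i => (c i : ℂ)) * star V with hW
  set T : Matrix n n ℂ := V * Matrix.diagonal (fun i => ((|e i| : ℝ) : ℂ)) * star V with hT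
  have hSpec : S = V * Matrix.diagonal (fun i => ((e i : ℝ) : ℂ)) * star V := by
    conv_lhs => rw [hS.spectral_theorem, Unitary.conjStarAlgAut_apply]
    rfl
  have hfe : (fun i => ((e i : ℝ) : ℂ)) * (fun i => ((c i : ℝ) : ℂ))
      = fun i => ((|e i| : ℝ) : ℂ) := by
    funext i
    rw [Pi.mul_apply, ← Complex.ofReal_mul, mul_comm (e i), hce i]
  have hfe' : (fun i => ((c i : ℝ) : ℂ)) * (fun i => ((e i : ℝ) : ℂ))
      = fun i => ((|e i| : ℝ) : ℂ) := by
    funext i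
    rw [Pi.mul_apply, ← Complex.ofReal_mul, hce i]
  have hSW : S * W = T := by
    rw [hSpec, hW, conj_mul_conj hVu, hfe, hT]
  have hWS : W * S = T := by
    rw [hSpec, hW, conj_mul_conj hVu, hfe', hT]
  have hTS : (T - S).PosSemidef := by
    have : T - S = V * Matrix.diagonal (fun i => ((|e i| - e i : ℝ) : ℂ)) * star V := by
      rw [hT, hSpec, ← Matrix.sub_mul, ← Matrix.mul_sub, Matrix.diagonal_sub]
      push_cast
      rfl
    rw [this]
    exact conj_psd hVu fun i => by simp [abs_nonneg, neg_le_abs, sub_nonneg, le_abs_self]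
  have hTpS : (T + S).PosSemidef := by
    have : T + S = V * Matrix.diagonal (fun i => ((|e i| + e i : ℝ) : ℂ)) * star V := by
      rw [hT, hSpec, ← Matrix.add_mul, ← Matrix.mul_add, Matrix.diagonal_add]
      push_cast
      rfl
    rw [this]
    exact conj_psd hVu fun i => by
      have := neg_abs_le (e i); linarith
  -- identity A - B = P * S + S * Q
  have hid : A - B = P * S + S * Q := by
    rw [hSd, Matrix.mul_sub, Matrix.sub_mul, hPd, hQd, hA.sqrt_mul_self, hB.sqrt_mul_self]
    abel
  -- trace((A-B) W) = trace(P T) + trace(Q T)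
  have htrW : ((A - B) * W).trace = (P * T).trace + (Q * T).trace := by
    rw [hid, Matrix.add_mul, Matrix.trace_add]
    refine congrArg₂ (· + ·) ?_ ?_
    · rw [Matrix.mul_assoc, hSW]
    · rw [Matrix.trace_mul_cycle, hWS, Matrix.trace_mul_comm]
  -- trace(S S) = trace(P S) - trace(Q S)
  have htrSS : (S * S).trace = (P * S).trace - (Q * S).trace := by
    conv_lhs => rw [hSd]
    rw [Matrix.sub_mul, Matrix.trace_sub, ← hSd]
  -- trace(S S) = trace A + trace B - 2 trace (P Q)
  have htrSS2 : (S * S).trace = A.trace + B.trace - 2 * (P * Q).trace := by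
    conv_lhs => rw [hSd]
    rw [Matrix.sub_mul, Matrix.mul_sub, Matrix.mul_sub, Matrix.trace_sub, Matrix.trace_sub,
      Matrix.trace_sub, hA.sqrt_mul_self, hB.sqrt_mul_self, Matrix.trace_mul_comm Q P]
    ring
  -- inequalities
  have h1 : (P * S).trace.re ≤ (P * T).trace.re := by
    have h := trace_mul_psd_re_nonneg hP hTS
    rw [Matrix.mul_sub, Matrix.trace_sub] at h
    have : ((P * T).trace - (P * S).trace).re = (P * T).trace.re - (P * S).trace.re :=
      Complex.sub_re _ _
    linarith [this ▸ h]
  have h2 : -(Q * S).trace.re ≤ (Q * T).trace.re := by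
    have h := trace_mul_psd_re_nonneg hQ hTpS
    rw [Matrix.mul_add, Matrix.trace_add] at h
    have : ((Q * T).trace + (Q * S).trace).re = (Q * T).trace.re + (Q * S).trace.re :=
      Complex.add_re _ _
    linarith [this ▸ h]
  -- contraction bound
  have hAB : (A - B).IsHermitian := hA.1.sub hB.1
  have h3 : (((A - B) * W).trace).re ≤ ∑ i, |hAB.eigenvalues i| := by
    rw [hW]
    exact re_trace_mul_contraction_le hAB hVu c (fun i => by
      by_cases h : 0 ≤ e i <;> simp [hc, h])
  have h4 : ((Matrix.posSemidef_conjTranspose_mul_self (A - B)).sqrt.trace).re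
      = ∑ i, |hAB.eigenvalues i| := herm_traceNorm hAB
  -- put everything together on real parts
  have e1 : (S * S).trace.re = (P * S).trace.re - (Q * S).trace.re := by
    rw [htrSS, Complex.sub_re]
  have e2 : (S * S).trace.re = A.trace.re + B.trace.re - 2 * (P * Q).trace.re := by
    rw [htrSS2]
    simp [Complex.sub_re, Complex.add_re, Complex.mul_re]
  have e3 : (((A - B) * W).trace).re = (P * T).trace.re + (Q * T).trace.re := by
    rw [htrW, Complex.add_re]
  rw [h4]
  linarith [h1, h2, h3, e1, e2, e3]


/-- diagonal entries of a PSD matrix have nonneg real part -/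
lemma psd_diag_re_nonneg {M : Matrix n n ℂ} (hM : M.PosSemidef) (i : n) :
    0 ≤ (M i i).re := by
  have h : 0 ≤ M i i := hM.diag_nonneg
  exact (Complex.le_def.mp h).1

/-- the "fidelity-type" inequality `Re Tr(√ρ √δ) ≤ Tr √(√δ ρ √δ)`. -/
lemma re_trace_sqrt_mul_sqrt_le {ρ δ : Matrix n n ℂ} (hρ : ρ.PosSemidef)
    (hδ : δ.PosSemidef) (h : (hδ.sqrt * ρ * hδ.sqrt).PosSemidef) :
    ((hρ.sqrt * hδ.sqrt).trace).re ≤ (h.sqrt.trace).re := by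
  have key := re_trace_le (hρ.sqrt * hδ.sqrt)
  have hCC : (hρ.sqrt * hδ.sqrt)ᴴ * (hρ.sqrt * hδ.sqrt) = hδ.sqrt * ρ * hδ.sqrt := by
    rw [Matrix.conjTranspose_mul, hρ.posSemidef_sqrt.1.eq, hδ.posSemidef_sqrt.1.eq]
    rw [Matrix.mul_assoc, ← Matrix.mul_assoc hρ.sqrt, hρ.sqrt_mul_self, ← Matrix.mul_assoc]
  rwa [sqrt_congr _ h hCC] at key

/-- `Re Tr (ρ δ) ≤ 1` for density matrices. -/
lemma trace_mul_le_one {ρ δ : Matrix n n ℂ} (hρ : ρ.PosSemidef) (hρtr : ρ.trace = 1)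
    (hδ : δ.PosSemidef) (hδtr : δ.trace = 1) : ((ρ * δ).trace).re ≤ 1 := by
  set V : Matrix n n ℂ := (hδ.1.eigenvectorUnitary : Matrix n n ℂ) with hV
  have hVu : V ∈ Matrix.unitaryGroup n ℂ := (hδ.1.eigenvectorUnitary).2
  set t := hδ.1.eigenvalues with ht
  have htnn : ∀ i, 0 ≤ t i := hδ.eigenvalues_nonneg
  have htsum : ∑ i, t i = 1 := by
    have := trace_hermitian hδ.1
    rw [hδtr] at this
    exact_mod_cast this.symm
  set G : Matrix n n ℂ := star V * ρ * V with hG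
  have hGpsd : G.PosSemidef := by
    have := hρ.conjTranspose_mul_mul_same V
    rwa [← Matrix.star_eq_conjTranspose] at this
  have hGtr : G.trace = 1 := by
    rw [hG, Matrix.trace_mul_cycle,
      Matrix.mem_unitaryGroup_iff.mp hVu, Matrix.one_mul, hρtr]
  have hGii : ∀ i, (G i i).re ≤ 1 := by
    intro i
    have h1 : (G i i).re ≤ G.trace.re := by
      rw [Matrix.trace, Complex.re_sum]
      exact Finset.single_le_sum (f := fun j => (G j j).re)
        (fun j _ => psd_diag_re_nonneg hGpsd j) (Finset.mem_univ i)
    rw [hGtr] at h1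
    simpa using h1
  have htr : (ρ * δ).trace = (G * Matrix.diagonal (RCLike.ofReal ∘ t)).trace := by
    conv_lhs => rw [hδ.1.spectral_theorem, Unitary.conjStarAlgAut_apply]
    rw [← Matrix.mul_assoc, ← Matrix.mul_assoc, Matrix.trace_mul_cycle, ← Matrix.mul_assoc, hG]
  rw [htr, Matrix.trace, Complex.re_sum]
  calc ∑ i, ((G * Matrix.diagonal (RCLike.ofReal ∘ t)).diag i).re
      = ∑ i, (G i i).re * t i := by
        congr 1 with i
        rw [Matrix.diag_apply, Matrix.mul_diagonal]
        simp [Complex.mul_re, Function.comp]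
    _ ≤ ∑ i, 1 * t i := by
        refine Finset.sum_le_sum fun i _ => ?_
        exact mul_le_mul_of_nonneg_right (hGii i) (htnn i)
    _ = 1 := by simp [htsum]


/-- trace of `√δ ρ √δ` equals trace of `ρ δ` -/
lemma trace_conj_sqrt {ρ δ : Matrix n n ℂ} (hδ : δ.PosSemidef) :
    (hδ.sqrt * ρ * hδ.sqrt).trace = (ρ * δ).trace := by
  rw [Matrix.trace_mul_cycle, hδ.sqrt_mul_self, Matrix.trace_mul_comm]

/-- the fidelity value is bounded: `Tr √(√δ ρ √δ) ≤ card n` -/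
lemma fidelity_sqrt_trace_le {ρ δ : Matrix n n ℂ} (hρ : ρ.PosSemidef) (hρtr : ρ.trace = 1)
    (hδ : δ.PosSemidef) (hδtr : δ.trace = 1)
    (h : (hδ.sqrt * ρ * hδ.sqrt).PosSemidef) :
    (h.sqrt.trace).re ≤ (Fintype.card n : ℝ) := by
  rw [sqrt_trace_re h]
  have htr1 : ((hδ.sqrt * ρ * hδ.sqrt).trace).re ≤ 1 := by
    rw [trace_conj_sqrt hδ]
    exact trace_mul_le_one hρ hρtr hδ hδtr
  have hsum : ∑ i, h.1.eigenvalues i ≤ 1 := by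
    have := trace_hermitian h.1
    have h2 : ((hδ.sqrt * ρ * hδ.sqrt).trace).re = ∑ i, h.1.eigenvalues i := by
      rw [this]; simp
    linarith [h2 ▸ htr1]
  have hle : ∀ i, Real.sqrt (h.1.eigenvalues i) ≤ 1 := by
    intro i
    rw [show (1:ℝ) = Real.sqrt 1 by simp]
    apply Real.sqrt_le_sqrt
    calc h.1.eigenvalues i ≤ ∑ j, h.1.eigenvalues j :=
          Finset.single_le_sum (fun j _ => h.eigenvalues_nonneg j) (Finset.mem_univ i)
      _ ≤ 1 := hsum
  calc ∑ i, Real.sqrt (h.1.eigenvalues i) ≤ ∑ _i : n, (1:ℝ) :=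
        Finset.sum_le_sum fun i _ => hle i
    _ = (Fintype.card n : ℝ) := by simp

lemma sqrt_trace_re_nonneg {A : Matrix n n ℂ} (hA : A.PosSemidef) :
    0 ≤ hA.sqrt.trace.re := by
  rw [sqrt_trace_re hA]
  exact Finset.sum_nonneg fun i _ => Real.sqrt_nonneg _


end CohAux

open CohAux

/-- The geometric measure of coherence `C_g(ρ) = 1 − sup_{δ incoherent} F(ρ, δ)`,
with fidelity `F(ρ, δ) = (Tr √(√δ ρ √δ))²`, is bounded above by the modified
trace distance measure of coherence `C'_tr(ρ)`. -/
theorem geometric_coherence_le_modified_trace_coherence {d : ℕ}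
    (ρ : Matrix (Fin d) (Fin d) ℂ) (hρ : ρ.PosSemidef) (hρtr : ρ.trace = 1) :
    1 - sSup {x : ℝ | ∃ (δ : Matrix (Fin d) (Fin d) ℂ) (hδ : δ.PosSemidef)
          (h : (hδ.sqrt * ρ * hδ.sqrt).PosSemidef),
        δ.trace = 1 ∧ δ.IsDiag ∧ x = ((h.sqrt.trace).re) ^ 2}
      ≤ sInf {x : ℝ | ∃ (l : ℝ) (δ : Matrix (Fin d) (Fin d) ℂ),
          0 ≤ l ∧ δ.PosSemidef ∧ δ.trace = 1 ∧ δ.IsDiag ∧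
          x = traceNorm (ρ - l • δ)} := by
  rcases Nat.eq_zero_or_pos d with rfl | hd
  · exfalso
    have h0 : ρ.trace = 0 := by
      simp [Matrix.trace]
    rw [h0] at hρtr
    exact zero_ne_one hρtr
  -- a fixed incoherent state
  set δ₀ : Matrix (Fin d) (Fin d) ℂ :=
    Matrix.diagonal (fun i => if i = ⟨0, hd⟩ then 1 else 0) with hδ₀
  have hδ₀psd : δ₀.PosSemidef := by
    refine Matrix.posSemidef_diagonal_iff.mpr fun i => ?_
    split <;> simp
  have hδ₀tr : δ₀.trace = 1 := by
    rw [hδ₀, Matrix.trace_diagonal]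
    simp
  have hδ₀diag : δ₀.IsDiag := Matrix.isDiag_diagonal _
  -- the sup set
  set S : Set ℝ := {x : ℝ | ∃ (δ : Matrix (Fin d) (Fin d) ℂ) (hδ : δ.PosSemidef)
          (h : (hδ.sqrt * ρ * hδ.sqrt).PosSemidef),
        δ.trace = 1 ∧ δ.IsDiag ∧ x = ((h.sqrt.trace).re) ^ 2} with hS
  have hSbdd : BddAbove S := by
    refine ⟨(d : ℝ) ^ 2, fun x hx => ?_⟩
    obtain ⟨δ, hδ, h, hδtr, hδdiag, rfl⟩ := hx
    have h1 : (h.sqrt.trace).re ≤ (d : ℝ) := by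
      have := fidelity_sqrt_trace_le hρ hρtr hδ hδtr h
      simpa using this
    have h2 : 0 ≤ (h.sqrt.trace).re := sqrt_trace_re_nonneg h
    have := pow_le_pow_left₀ h2 h1 2
    simpa using this
  apply le_csInf
  · exact ⟨traceNorm (ρ - (0:ℝ) • δ₀), 0, δ₀, le_refl 0, hδ₀psd, hδ₀tr, hδ₀diag, rfl⟩
  rintro x ⟨l, δ, hl, hδ, hδtr, hδdiag, rfl⟩
  -- our fidelity witness
  have h : (hδ.sqrt * ρ * hδ.sqrt).PosSemidef := by
    have := hρ.mul_mul_conjTranspose_same hδ.sqrt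
    rwa [hδ.posSemidef_sqrt.1.eq] at this
  obtain ⟨r, hrdef⟩ : ∃ r : ℝ, (h.sqrt.trace).re = r := ⟨_, rfl⟩
  have hmem : r ^ 2 ∈ S := ⟨δ, hδ, h, hδtr, hδdiag, by rw [hrdef]⟩
  have hsup : r ^ 2 ≤ sSup S := le_csSup hSbdd hmem
  have hmain : 1 - r ^ 2 ≤ traceNorm (ρ - l • δ) := by
    have hsmul : l • δ = ((l : ℝ) : ℂ) • δ := by
      ext i j
      simp [Matrix.smul_apply, Complex.real_smul]
    have hB : (((l : ℝ) : ℂ) • δ).PosSemidef := smul_psd hδ hl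
    have PS := powers_stormer hρ hB
    -- identify traceNorm
    have htn : traceNorm (ρ - l • δ)
        = ((Matrix.posSemidef_conjTranspose_mul_self (ρ - ((l : ℝ) : ℂ) • δ)).sqrt.trace).re := by
      rw [traceNorm, hsmul]
    -- trace of smul
    have htrδ : ((((l : ℝ) : ℂ) • δ).trace).re = l := by
      rw [Matrix.trace_smul]
      simp [hδtr]
    obtain ⟨t, htdef⟩ : ∃ t : ℝ, ((hρ.sqrt * hδ.sqrt).trace).re = t := ⟨_, rfl⟩
    -- sqrt of smul
    have hsq : (hρ.sqrt * hB.sqrt).trace.re = Real.sqrt l * t := by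
      rw [sqrt_smul hδ hl hB, Matrix.mul_smul, Matrix.trace_smul, ← htdef]
      simp [Complex.real_smul, Complex.mul_re]
    have htle : t ≤ r := by
      rw [← htdef, ← hrdef]
      exact re_trace_sqrt_mul_sqrt_le hρ hδ h
    have hρre : ρ.trace.re = 1 := by rw [hρtr]; rfl
    rw [hρre, htrδ, hsq] at PS
    have hfin : 1 - r ^ 2 ≤ 1 + l - 2 * (Real.sqrt l * t) := by
      nlinarith [Real.sq_sqrt hl, Real.sqrt_nonneg l, htle,
        sq_nonneg (Real.sqrt l - r),
        mul_nonneg (Real.sqrt_nonneg l) (sub_nonneg.mpr htle)]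
    rw [htn]
    exact le_trans hfin PS
  linarith
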